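/- Let p be an odd prime. Then d_+ := gcd(S_A(4), 4^p + 1) equals 5 if 5 divides p − 2, and equals 1 otherwise. -/

import Mathlib

/-- The quaternary cyclotomic sequence of period 2p from Kim et al.:
`a 0 = 0`, `a p = 2`; for odd `i ≠ p`, value `0`/`1` according to Legendre symbol `(i/p) = ±1`;
for even `i > 0`, value `2`/`3` according to `((i/2)/p) = ±1`. -/
def seqA (p : ℕ) [Fact p.Prime] (i : ℕ) : ℤ :=
  if i = 0 then 0
  else if i = p then 2
  else if i % 2 = 1 then (if legendreSym p i = 1 then 0 else 1)
  else if legendreSym p (i / 2) = 1 then 2 else 3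

/-- `S_A(4) = Σ_{i=0}^{2p-1} a(i)·4^i`. -/
def SA (p : ℕ) [Fact p.Prime] : ℤ := ∑ i ∈ Finset.range (2 * p), seqA p i * 4 ^ i

/-- The Gauss sum `G_p = Σ_{a=1}^{p-1} (a/p)·4^{2a}`. -/
def Gp (p : ℕ) [Fact p.Prime] : ℤ := ∑ a ∈ Finset.Icc 1 (p - 1), legendreSym p a * 4 ^ (2 * a)

open Finset

lemma sum_range_two_mul {M : Type*} [AddCommMonoid M] (n : ℕ) (f : ℕ → M) :
    ∑ i ∈ range (2 * n), f i = ∑ b ∈ range n, (f (2 * b) + f (2 * b + 1)) := by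
  induction n with
  | zero => simp
  | succ n ih =>
      have h2 : 2 * (n + 1) = (2 * n) + 1 + 1 := by ring
      rw [h2, Finset.sum_range_succ, Finset.sum_range_succ, ih, Finset.sum_range_succ,
        add_assoc]

lemma leg_natCast_ne (p : ℕ) [Fact p.Prime] {b : ℕ} (hb : ¬ p ∣ b) :
    legendreSym p b = 1 ∨ legendreSym p b = -1 := by
  apply legendreSym.eq_one_or_neg_one
  rw [Int.cast_natCast, Ne, ZMod.natCast_eq_zero_iff]
  exact hb

lemma not_dvd_odd (p : ℕ) [Fact p.Prime] {b : ℕ} (hb : b < p) (hbp : 2 * b + 1 ≠ p) :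
    ¬ p ∣ 2 * b + 1 := by
  rintro ⟨k, hk⟩
  have hp2 : 2 ≤ p := Nat.Prime.two_le Fact.out
  rcases Nat.lt_or_ge k 2 with h' | h'
  · interval_cases k <;> omega
  · have := Nat.mul_le_mul_left p h'
    omega

lemma seqA_even (p : ℕ) [Fact p.Prime] (hodd : Odd p) {b : ℕ} (hb0 : b ≠ 0) (hbp : b < p) :
    2 * seqA p (2 * b) = 5 - legendreSym p b := by
  have h1 : 2 * b ≠ 0 := by omega
  have h2 : 2 * b ≠ p := by rintro rfl; exact (Nat.not_odd_iff_even.mpr ⟨b, by ring⟩) hodd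
  have h3 : ¬ (2 * b) % 2 = 1 := by omega
  have h4 : 2 * b / 2 = b := by omega
  rcases leg_natCast_ne p (b := b)
      (by intro h; exact absurd (Nat.le_of_dvd (by omega) h) (by omega)) with h | h <;>
    simp [seqA, h1, h2, h3, h4, h]


lemma seqA_odd (p : ℕ) [Fact p.Prime] {b : ℕ} (hb : b < p) (hbp : 2 * b + 1 ≠ p) :
    2 * seqA p (2 * b + 1) = 1 - legendreSym p (2 * b + 1) := by
  have h1 : 2 * b + 1 ≠ 0 := by omega
  have h3 : (2 * b + 1) % 2 = 1 := by omega
  rcases leg_natCast_ne p (not_dvd_odd p hb hbp) with h | h <;>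
  · push_cast at h ⊢
    simp [seqA, h1, h3, hbp, h]

lemma leg_self (p : ℕ) [Fact p.Prime] : legendreSym p p = 0 := by
  rw [legendreSym]
  have : ((p : ℤ) : ZMod p) = 0 := by
    rw [Int.cast_natCast, ZMod.natCast_self]
  rw [this, quadraticChar_zero]


lemma base (p : ℕ) [Fact p.Prime] (hodd : Odd p) :
    2 * SA p = 3 * 4 ^ p - 5
      + (∑ b ∈ range p, (1 - legendreSym p (2 * b + 1)) * 4 ^ (2 * b + 1))
      + ∑ b ∈ range p, (5 - legendreSym p b) * 4 ^ (2 * b) := by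
  have hp2 : 2 ≤ p := Nat.Prime.two_le Fact.out
  obtain ⟨m, hm⟩ := id hodd
  have hm1 : m ≠ 0 := by omega
  have hpt : ∀ b ∈ range p,
      2 * (seqA p (2 * b) * 4 ^ (2 * b) + seqA p (2 * b + 1) * 4 ^ (2 * b + 1))
      = (5 - legendreSym p b) * 4 ^ (2 * b)
        + (1 - legendreSym p (2 * b + 1)) * 4 ^ (2 * b + 1)
        - (if b = 0 then (5 : ℤ) else 0) + (if b = m then 3 * 4 ^ p else 0) := by
    intro b hb
    have hblt := Finset.mem_range.mp hb
    have hstep : 2 * (seqA p (2 * b) * 4 ^ (2 * b) + seqA p (2 * b + 1) * 4 ^ (2 * b + 1))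
        = (2 * seqA p (2 * b)) * 4 ^ (2 * b) + (2 * seqA p (2 * b + 1)) * 4 ^ (2 * b + 1) := by
      ring
    rw [hstep]
    rcases eq_or_ne b m with hbm | hbm
    · have hbp' : 2 * b + 1 = p := by omega
      have hb0 : b ≠ 0 := by omega
      have hpne : ¬ p = 0 := by omega
      have hseqp : seqA p (2 * b + 1) = 2 := by rw [hbp']; simp [seqA, hpne]
      have hcast : (2 * (b : ℤ) + 1) = (p : ℤ) := by omega
      have hexp : 2 * b + 1 = p := hbp'
      rw [seqA_even p hodd hb0 hblt, hseqp, hcast, leg_self, hexp]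
      simp [hb0, hbm, hm1]
      ring
    · have hbp' : 2 * b + 1 ≠ p := by omega
      rcases eq_or_ne b 0 with rfl | hb0
      · have hseq0 : seqA p (2 * 0) = 0 := by simp [seqA]
        rw [hseq0, seqA_odd p hblt hbp']
        have hleg0 : legendreSym p ((0 : ℕ) : ℤ) = 0 := by
          norm_num [legendreSym.at_zero]
        simp only [if_neg hbm, Nat.cast_zero, hleg0]
        simp
      · rw [seqA_even p hodd hb0 hblt, seqA_odd p hblt hbp']
        simp only [if_neg hbm, if_neg hb0]
        ring
  rw [SA, sum_range_two_mul, Finset.mul_sum, Finset.sum_congr rfl hpt,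
    Finset.sum_add_distrib, Finset.sum_sub_distrib, Finset.sum_add_distrib,
    Finset.sum_ite_eq' (range p) 0 (fun _ => (5 : ℤ)),
    Finset.sum_ite_eq' (range p) m (fun _ => (3 : ℤ) * 4 ^ p)]
  simp only [Finset.mem_range.mpr (by omega : 0 < p), Finset.mem_range.mpr (by omega : m < p),
    if_true]
  ring

lemma sum_range_zmod {p : ℕ} [NeZero p] {M : Type*} [AddCommMonoid M] (f : ZMod p → M) :
    ∑ b ∈ range p, f (b : ZMod p) = ∑ x : ZMod p, f x :=
  Finset.sum_nbij' (fun b => (b : ZMod p)) (fun x => x.val)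
    (fun a _ => Finset.mem_univ _) (fun x _ => Finset.mem_range.mpr (ZMod.val_lt x))
    (fun a ha => ZMod.val_natCast_of_lt (Finset.mem_range.mp ha))
    (fun x _ => ZMod.natCast_zmod_val x) (fun a _ => rfl)

lemma two_ne_zero_zmod (p : ℕ) [Fact p.Prime] (hodd : Odd p) : (2 : ZMod p) ≠ 0 := by
  have hne : p ≠ 2 := by rintro rfl; exact (by norm_num : ¬ Odd 2) hodd
  have : ¬ (p : ℕ) ∣ 2 := fun h => hne ((Nat.prime_dvd_prime_iff_eq Fact.out Nat.prime_two).mp h)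
  have h2 : ((2 : ℕ) : ZMod p) ≠ 0 := by
    rw [Ne, ZMod.natCast_eq_zero_iff]; exact this
  exact_mod_cast h2

lemma affine_sum_zmod {p : ℕ} [Fact p.Prime] (hodd : Odd p) {M : Type*} [AddCommMonoid M]
    (f : ZMod p → M) :
    ∑ x : ZMod p, f (2 * x + 1) = ∑ x : ZMod p, f x :=
  Fintype.sum_equiv ((Equiv.mulLeft₀ 2 (two_ne_zero_zmod p hodd)).trans (Equiv.addRight 1)) _ _
    (fun x => rfl)

lemma Z1 (p : ℕ) [Fact p.Prime] (hodd : Odd p) :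
    ∑ b ∈ range p, legendreSym p (b : ℕ) = 0 := by
  have hchar : ringChar (ZMod p) ≠ 2 := by
    rw [ZMod.ringChar_zmod_n]
    rintro rfl; exact (by norm_num : ¬ Odd 2) hodd
  calc ∑ b ∈ range p, legendreSym p (b : ℕ)
      = ∑ b ∈ range p, (fun x : ZMod p => quadraticChar (ZMod p) x) ((b : ZMod p)) := by
        apply Finset.sum_congr rfl; intro b _
        simp only [legendreSym, Int.cast_natCast]
    _ = ∑ x : ZMod p, quadraticChar (ZMod p) x := sum_range_zmod _
    _ = 0 := quadraticChar_sum_zero hchar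

lemma Z2 (p : ℕ) [Fact p.Prime] (hodd : Odd p) :
    ∑ b ∈ range p, legendreSym p (2 * (b : ℕ) + 1) = 0 := by
  have hchar : ringChar (ZMod p) ≠ 2 := by
    rw [ZMod.ringChar_zmod_n]
    rintro rfl; exact (by norm_num : ¬ Odd 2) hodd
  calc ∑ b ∈ range p, legendreSym p (2 * (b : ℕ) + 1)
      = ∑ b ∈ range p, (fun x : ZMod p => quadraticChar (ZMod p) (2 * x + 1)) ((b : ZMod p)) := by
        apply Finset.sum_congr rfl; intro b _
        simp only [legendreSym]
        push_cast
        rfl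
    _ = ∑ x : ZMod p, quadraticChar (ZMod p) (2 * x + 1) :=
        sum_range_zmod (fun x : ZMod p => quadraticChar (ZMod p) (2 * x + 1))
    _ = ∑ x : ZMod p, quadraticChar (ZMod p) x := affine_sum_zmod hodd _
    _ = 0 := quadraticChar_sum_zero hchar

lemma SA_mod5 (p : ℕ) [Fact p.Prime] (hodd : Odd p) :
    ((SA p : ℤ) : ZMod 5) = 2 * ((p : ZMod 5) - 2) := by
  have h := congrArg (fun z : ℤ => (z : ZMod 5)) (base p hodd)
  push_cast at h
  have h4odd : ∀ b : ℕ, (4 : ZMod 5) ^ (2 * b + 1) = -1 := by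
    intro b
    rw [pow_succ, pow_mul, show (4 : ZMod 5) ^ 2 = 1 from by decide, one_pow, one_mul]
    decide
  have h4ev : ∀ b : ℕ, (4 : ZMod 5) ^ (2 * b) = 1 := by
    intro b
    rw [pow_mul, show (4 : ZMod 5) ^ 2 = 1 from by decide, one_pow]
  have cZ2 : ∑ b ∈ range p, ((legendreSym p (2 * (b : ℕ) + 1) : ℤ) : ZMod 5) = 0 := by
    have := congrArg (fun z : ℤ => (z : ZMod 5)) (Z2 p hodd)
    push_cast at this
    exact this
  have cZ1 : ∑ b ∈ range p, ((legendreSym p ((b : ℕ) : ℤ) : ℤ) : ZMod 5) = 0 := by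
    have := congrArg (fun z : ℤ => (z : ZMod 5)) (Z1 p hodd)
    push_cast at this
    exact this
  have hs1 : ∑ b ∈ range p,
      ((1 : ZMod 5) - (legendreSym p (2 * (b : ℕ) + 1) : ZMod 5)) * 4 ^ (2 * b + 1)
      = -(p : ZMod 5) := by
    calc ∑ b ∈ range p, ((1 : ZMod 5) - (legendreSym p (2 * (b : ℕ) + 1) : ZMod 5)) * 4 ^ (2 * b + 1)
        = ∑ b ∈ range p, ((legendreSym p (2 * (b : ℕ) + 1) : ZMod 5) - 1) := by
          apply Finset.sum_congr rfl; intro b _; rw [h4odd b]; ring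
      _ = -(p : ZMod 5) := by
          rw [Finset.sum_sub_distrib, cZ2, Finset.sum_const, Finset.card_range]
          simp
  have hs2 : ∑ b ∈ range p,
      ((5 : ZMod 5) - (legendreSym p ((b : ℕ) : ℤ) : ZMod 5)) * 4 ^ (2 * b) = 0 := by
    calc ∑ b ∈ range p, ((5 : ZMod 5) - (legendreSym p ((b : ℕ) : ℤ) : ZMod 5)) * 4 ^ (2 * b)
        = ∑ b ∈ range p, (-(legendreSym p ((b : ℕ) : ℤ) : ZMod 5)) := by
          apply Finset.sum_congr rfl; intro b _
          rw [h4ev b, show (5 : ZMod 5) = 0 from by decide]; ring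
      _ = 0 := by rw [Finset.sum_neg_distrib, cZ1, neg_zero]
  rw [hs1, hs2] at h
  have h4p : (4 : ZMod 5) ^ p = -1 := by
    rw [show (4 : ZMod 5) = -1 from by decide]; exact hodd.neg_one_pow
  rw [h4p] at h
  have final : ∀ x y : ZMod 5, 2 * y = 3 * (-1) - 5 + -x + 0 → y = 2 * (x - 2) := by decide
  exact final _ _ h

lemma order_four (p q : ℕ) [Fact p.Prime] [Fact q.Prime] (hq5 : q ≠ 5) (hq2 : q ≠ 2)
    (hq3 : q ≠ 3) (h4 : (4 : ZMod q) ^ p = -1) : orderOf (4 : ZMod q) = 2 * p := by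
  have hq2' : 2 < q := by
    have := (Fact.out : q.Prime).two_le; omega
  have hne11 : (-1 : ZMod q) ≠ 1 := by
    intro h
    have : ((2 : ℕ) : ZMod q) = 0 := by push_cast; linear_combination -h
    rw [ZMod.natCast_eq_zero_iff] at this
    have := Nat.le_of_dvd (by norm_num) this
    omega
  have h16 : (16 : ZMod q) ^ p = 1 := by
    have h' : (16 : ZMod q) = 4 ^ 2 := by norm_num
    rw [h', ← pow_mul, mul_comm, pow_mul, h4, neg_one_sq]
  have h16ne1 : (16 : ZMod q) ≠ 1 := by
    intro h
    have : ((15 : ℕ) : ZMod q) = 0 := by push_cast; linear_combination h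
    rw [ZMod.natCast_eq_zero_iff] at this
    have hqP : q.Prime := Fact.out
    have h35 : q ∣ 3 * 5 := by norm_num at this ⊢; exact this
    rcases (Nat.Prime.dvd_mul hqP).mp h35 with h' | h'
    · exact hq3 ((Nat.prime_dvd_prime_iff_eq hqP (by norm_num)).mp h')
    · exact hq5 ((Nat.prime_dvd_prime_iff_eq hqP (by norm_num)).mp h')
  have h16o : orderOf (16 : ZMod q) = p := orderOf_eq_prime h16 h16ne1
  have h16o' : orderOf ((4 : ZMod q) ^ 2)
      = orderOf (4 : ZMod q) / Nat.gcd (orderOf (4 : ZMod q)) 2 :=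
    orderOf_pow' (4 : ZMod q) two_ne_zero
  have h162 : (16 : ZMod q) = 4 ^ 2 := by norm_num
  rw [← h162, h16o] at h16o'
  have hg : Nat.gcd (orderOf (4 : ZMod q)) 2 ∣ orderOf (4 : ZMod q) := Nat.gcd_dvd_left _ _
  have ho : orderOf (4 : ZMod q) = p * Nat.gcd (orderOf (4 : ZMod q)) 2 := by
    rw [h16o']
    exact (Nat.div_mul_cancel hg).symm
  rcases (Nat.dvd_prime Nat.prime_two).mp (Nat.gcd_dvd_right (orderOf (4 : ZMod q)) 2)
    with h1 | h2
  · exfalso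
    rw [h1, mul_one] at ho
    have := pow_orderOf_eq_one (4 : ZMod q)
    rw [ho, h4] at this
    exact hne11 this
  · rw [h2, mul_comm] at ho
    exact ho

lemma key (p q : ℕ) [Fact p.Prime] [hqI : Fact q.Prime] (hodd : Odd p) (hp17 : 17 ≤ p)
    (hq5 : q ≠ 5) (hqS : (q : ℤ) ∣ SA p) (hqM : (q : ℤ) ∣ 4 ^ p + 1) : False := by
  have hqP : q.Prime := Fact.out
  have hpP : p.Prime := Fact.out
  -- 4^p = -1 in ZMod q
  have h4 : (4 : ZMod q) ^ p = -1 := by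
    have h0 : (((4 ^ p + 1 : ℤ)) : ZMod q) = 0 :=
      (ZMod.intCast_zmod_eq_zero_iff_dvd _ q).mpr hqM
    push_cast at h0
    linear_combination h0
  have hq2 : q ≠ 2 := by
    rintro rfl
    have h2 : (2 : ℤ) ∣ 4 ^ p := dvd_pow (by norm_num) (by omega)
    obtain ⟨a, ha⟩ := h2
    obtain ⟨b, hb⟩ := hqM
    omega
  have hq3 : q ≠ 3 := by
    rintro rfl
    have h3 : (4 - 1 : ℤ) ∣ 4 ^ p - 1 ^ p := sub_dvd_pow_sub_pow 4 1 p
    rw [one_pow] at h3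
    obtain ⟨a, ha⟩ := h3
    obtain ⟨b, hb⟩ := hqM
    omega
  have hq2' : 2 < q := by have := hqP.two_le; omega
  have hSz : ((SA p : ℤ) : ZMod q) = 0 := (ZMod.intCast_zmod_eq_zero_iff_dvd _ q).mpr hqS
  -- machinery
  have hne11 : (-1 : ZMod q) ≠ 1 := by
    intro h
    have : ((2 : ℕ) : ZMod q) = 0 := by push_cast; linear_combination -h
    rw [ZMod.natCast_eq_zero_iff] at this
    have := Nat.le_of_dvd (by norm_num) this
    omega
  have h16 : (16 : ZMod q) ^ p = 1 := by
    have h' : (16 : ZMod q) = 4 ^ 2 := by norm_num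
    rw [h', ← pow_mul, mul_comm, pow_mul, h4, neg_one_sq]
  have h16ne1 : (16 : ZMod q) ≠ 1 := by
    intro h
    have : ((15 : ℕ) : ZMod q) = 0 := by push_cast; linear_combination h
    rw [ZMod.natCast_eq_zero_iff] at this
    have h35 : q ∣ 3 * 5 := by norm_num at this ⊢; exact this
    rcases (Nat.Prime.dvd_mul hqP).mp h35 with h' | h'
    · exact hq3 ((Nat.prime_dvd_prime_iff_eq hqP (by norm_num)).mp h')
    · exact hq5 ((Nat.prime_dvd_prime_iff_eq hqP (by norm_num)).mp h')
  have h16o : orderOf (16 : ZMod q) = p := orderOf_eq_prime h16 h16ne1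
  have hprim : IsPrimitiveRoot (16 : ZMod q) p := h16o ▸ IsPrimitiveRoot.orderOf (16 : ZMod q)
  have hneg4 : (-4 : ZMod q) ^ p = 1 := by
    rw [Odd.neg_pow hodd, h4, neg_neg]
  -- characters
  set ψ : AddChar (ZMod p) (ZMod q) := AddChar.zmodChar p h16 with hψdef
  set ψ' : AddChar (ZMod p) (ZMod q) := AddChar.zmodChar p hneg4 with hψ'def
  set χ : MulChar (ZMod p) (ZMod q) :=
    (quadraticChar (ZMod p)).ringHomComp (Int.castRingHom (ZMod q)) with hχdef
  have hχquad : χ.IsQuadratic := (quadraticChar_isQuadratic (ZMod p)).comp _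
  have hpchar2 : ringChar (ZMod p) ≠ 2 := by
    rw [ZMod.ringChar_zmod_n]
    rintro rfl; exact (by norm_num : ¬ Odd 2) hodd
  have hχ1 : χ ≠ 1 := by
    obtain ⟨a, ha⟩ := FiniteField.exists_nonsquare (F := ZMod p) hpchar2
    have ha' : quadraticChar (ZMod p) a = -1 :=
      (quadraticChar_neg_one_iff_not_isSquare).mpr ha
    intro h
    have ha0 : a ≠ 0 := by rintro rfl; exact ha (by simp)
    have : χ a = 1 := by rw [h]; exact MulChar.one_apply (isUnit_iff_ne_zero.mpr ha0)
    rw [hχdef] at this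
    simp only [MulChar.ringHomComp_apply, ha'] at this
    rw [map_neg, map_one] at this
    exact hne11 this
  have hψprim : ψ.IsPrimitive := AddChar.zmodChar_primitive_of_primitive_root p hprim
  have hGsq : (gaussSum χ ψ) ^ 2 = χ (-1) * p := by
    have := gaussSum_sq hχ1 hχquad hψprim
    rwa [ZMod.card p] at this
  -- mulShift relation: ψ'(2x) = ψ(x)
  have h2pn : (2 : ZMod p) ≠ 0 := two_ne_zero_zmod p hodd
  have hu : IsUnit (2 : ZMod p) := isUnit_iff_ne_zero.mpr h2pn
  have hshift : AddChar.mulShift ψ' (2 : ZMod p) = ψ := by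
    apply AddChar.ext
    intro x
    rw [AddChar.mulShift_apply]
    have hx : ((2 : ZMod p) * x) = (((2 * x.val : ℕ)) : ZMod p) := by
      push_cast [ZMod.natCast_zmod_val]
      ring
    have hx2 : x = ((x.val : ℕ) : ZMod p) := (ZMod.natCast_zmod_val x).symm
    rw [hx, hψ'def, AddChar.zmodChar_apply', pow_mul]
    nth_rewrite 2 [hx2]
    rw [hψdef, AddChar.zmodChar_apply']
    norm_num
  have hHG : χ 2 * gaussSum χ ψ = gaussSum χ ψ' := by
    have h := gaussSum_mulShift χ ψ' hu.unit
    rwa [hu.unit_spec, hshift] at h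
  -- geometric sum vanishes
  have hgeo : ∑ b ∈ range p, (16 : ZMod q) ^ b = 0 := by
    have h := geom_sum_mul (16 : ZMod q) p
    rw [h16, sub_self] at h
    rcases mul_eq_zero.mp h with h' | h'
    · exact h'
    · exact absurd (sub_eq_zero.mp h') h16ne1
  -- Gauss sum expressions
  have hE1 : ∑ b ∈ range p, ((legendreSym p (b : ℕ) : ℤ) : ZMod q) * (16 : ZMod q) ^ b
      = gaussSum χ ψ := by
    calc ∑ b ∈ range p, ((legendreSym p (b : ℕ) : ℤ) : ZMod q) * (16 : ZMod q) ^ b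
        = ∑ b ∈ range p, (fun x : ZMod p => χ x * ψ x) ((b : ZMod p)) := by
          apply Finset.sum_congr rfl; intro b _
          show _ = χ ((b : ℕ) : ZMod p) * ψ ((b : ℕ) : ZMod p)
          rw [hψdef, AddChar.zmodChar_apply', hχdef]
          simp only [MulChar.ringHomComp_apply, legendreSym]
          norm_num
      _ = ∑ x : ZMod p, χ x * ψ x := sum_range_zmod (fun x : ZMod p => χ x * ψ x)
      _ = gaussSum χ ψ := rfl
  have hE2 : ∑ b ∈ range p,
      ((legendreSym p (2 * (b : ℕ) + 1) : ℤ) : ZMod q) * (-4 : ZMod q) ^ (2 * b + 1)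
      = gaussSum χ ψ' := by
    calc ∑ b ∈ range p,
        ((legendreSym p (2 * (b : ℕ) + 1) : ℤ) : ZMod q) * (-4 : ZMod q) ^ (2 * b + 1)
        = ∑ b ∈ range p, (fun x : ZMod p => χ (2 * x + 1) * ψ' (2 * x + 1)) ((b : ZMod p)) := by
          apply Finset.sum_congr rfl; intro b _
          have h1 : (2 : ZMod p) * ((b : ℕ) : ZMod p) + 1 = (((2 * b + 1 : ℕ)) : ZMod p) := by
            push_cast; ring
          show _ = χ (2 * ((b : ℕ) : ZMod p) + 1) * ψ' (2 * ((b : ℕ) : ZMod p) + 1)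
          rw [h1, hψ'def, AddChar.zmodChar_apply', hχdef]
          simp only [MulChar.ringHomComp_apply, legendreSym]
          norm_num
      _ = ∑ x : ZMod p, χ (2 * x + 1) * ψ' (2 * x + 1) :=
          sum_range_zmod (fun x : ZMod p => χ (2 * x + 1) * ψ' (2 * x + 1))
      _ = ∑ x : ZMod p, χ x * ψ' x := affine_sum_zmod hodd (fun x : ZMod p => χ x * ψ' x)
      _ = gaussSum χ ψ' := rfl
  -- main congruence
  have hb := congrArg (fun z : ℤ => (z : ZMod q)) (base p hodd)
  push_cast at hb
  have hS1 : ∑ b ∈ range p,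
      ((1 : ZMod q) - ((legendreSym p (2 * (b : ℕ) + 1) : ℤ) : ZMod q)) * (4 : ZMod q) ^ (2 * b + 1)
      = gaussSum χ ψ' := by
    calc ∑ b ∈ range p,
        ((1 : ZMod q) - ((legendreSym p (2 * (b : ℕ) + 1) : ℤ) : ZMod q)) * (4 : ZMod q) ^ (2 * b + 1)
        = ∑ b ∈ range p, ((4 : ZMod q) * 16 ^ b
            + ((legendreSym p (2 * (b : ℕ) + 1) : ℤ) : ZMod q) * (-4 : ZMod q) ^ (2 * b + 1)) := by
          apply Finset.sum_congr rfl; intro b _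
          have e1 : (4 : ZMod q) ^ (2 * b + 1) = 4 * 16 ^ b := by
            rw [pow_succ, pow_mul]
            norm_num [mul_comm]
          have e2 : (-4 : ZMod q) ^ (2 * b + 1) = -((4 : ZMod q) ^ (2 * b + 1)) :=
            Odd.neg_pow ⟨b, by ring⟩ 4
          rw [e2, e1]; ring
      _ = 4 * ∑ b ∈ range p, (16 : ZMod q) ^ b + ∑ b ∈ range p,
            ((legendreSym p (2 * (b : ℕ) + 1) : ℤ) : ZMod q) * (-4 : ZMod q) ^ (2 * b + 1) := by
          rw [Finset.sum_add_distrib, Finset.mul_sum]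
      _ = gaussSum χ ψ' := by rw [hgeo, hE2]; ring
  have hS2 : ∑ b ∈ range p,
      ((5 : ZMod q) - ((legendreSym p (b : ℕ) : ℤ) : ZMod q)) * (4 : ZMod q) ^ (2 * b)
      = - gaussSum χ ψ := by
    calc ∑ b ∈ range p,
        ((5 : ZMod q) - ((legendreSym p (b : ℕ) : ℤ) : ZMod q)) * (4 : ZMod q) ^ (2 * b)
        = ∑ b ∈ range p, ((5 : ZMod q) * 16 ^ b
            - ((legendreSym p (b : ℕ) : ℤ) : ZMod q) * (16 : ZMod q) ^ b) := by
          apply Finset.sum_congr rfl; intro b _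
          have e1 : (4 : ZMod q) ^ (2 * b) = 16 ^ b := by
            rw [pow_mul]; norm_num
          rw [e1]; ring
      _ = 5 * ∑ b ∈ range p, (16 : ZMod q) ^ b - ∑ b ∈ range p,
            ((legendreSym p (b : ℕ) : ℤ) : ZMod q) * (16 : ZMod q) ^ b := by
          rw [Finset.sum_sub_distrib, Finset.mul_sum]
      _ = - gaussSum χ ψ := by rw [hgeo, hE1]; ring
  rw [hS1, hS2, h4, hSz] at hb
  rw [← hHG] at hb
  -- hb : 2 * 0 = 3 * -1 - 5 + χ 2 * G + -G
  have hmain : (χ 2 - 1) * gaussSum χ ψ = 8 := by linear_combination -hb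
  have hχ2 : χ 2 = ((legendreSym p 2 : ℤ) : ZMod q) := by
    rw [hχdef]
    simp only [MulChar.ringHomComp_apply, legendreSym]
    norm_num
  have h2castP : ((2 : ℤ) : ZMod p) ≠ 0 := by
    push_cast; exact h2pn
  -- order bound: q ≥ 2p + 1
  have ho4 := order_four p q hq5 hq2 hq3 h4
  have h4ne0 : (4 : ZMod q) ≠ 0 := by
    intro h
    have h4' : ((4 : ℕ) : ZMod q) = 0 := by push_cast; exact h
    rw [ZMod.natCast_eq_zero_iff] at h4'
    have : q ∣ 2 ^ 2 := by norm_num at h4' ⊢; exact h4'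
    have := Nat.Prime.dvd_of_dvd_pow hqP this
    have := Nat.le_of_dvd (by norm_num) this
    omega
  have hfl : (4 : ZMod q) ^ (q - 1) = 1 := ZMod.pow_card_sub_one_eq_one h4ne0
  have hdvd1 : 2 * p ∣ q - 1 := ho4 ▸ orderOf_dvd_of_pow_eq_one hfl
  have hq2p1 : 2 * p + 1 ≤ q := by
    have := Nat.le_of_dvd (by omega) hdvd1
    omega
  rcases legendreSym.eq_one_or_neg_one (p := p) (a := 2) h2castP with hl | hl
  · -- χ 2 = 1 : then 8 = 0 in ZMod q, impossible
    rw [hχ2, hl] at hmain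
    have h8 : ((8 : ℕ) : ZMod q) = 0 := by push_cast at hmain ⊢; linear_combination -hmain
    rw [ZMod.natCast_eq_zero_iff] at h8
    have : q ∣ 2 ^ 3 := by norm_num at h8 ⊢; exact h8
    have := Nat.Prime.dvd_of_dvd_pow hqP this
    have := Nat.le_of_dvd (by norm_num) this
    omega
  · -- χ 2 = -1 : G = -4
    rw [hχ2, hl] at hmain
    push_cast at hmain
    have h2qn : (2 : ZMod q) ≠ 0 := by
      intro h
      have h2' : ((2 : ℕ) : ZMod q) = 0 := by push_cast; exact h
      rw [ZMod.natCast_eq_zero_iff] at h2'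
      have := Nat.le_of_dvd (by norm_num) h2'
      omega
    have hG : gaussSum χ ψ = -4 := by
      have hfac : (2 : ZMod q) * (gaussSum χ ψ + 4) = 0 := by linear_combination -hmain
      rcases mul_eq_zero.mp hfac with h' | h'
      · exact absurd h' h2qn
      · linear_combination h'
    have h16p : (16 : ZMod q) = χ (-1) * (p : ZMod q) := by
      rw [← hGsq, hG]; norm_num
    have hχn1 : χ (-1) = ((legendreSym p (-1) : ℤ) : ZMod q) := by
      rw [hχdef]
      simp only [MulChar.ringHomComp_apply, legendreSym]
      norm_num
    have hn1castP : ((-1 : ℤ) : ZMod p) ≠ 0 := by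
      push_cast
      exact neg_ne_zero.mpr one_ne_zero
    rcases legendreSym.eq_one_or_neg_one (p := p) (a := -1) hn1castP with he | he
    · rw [hχn1, he] at h16p
      push_cast at h16p
      have hz : ((((p : ℤ) - 16) : ℤ) : ZMod q) = 0 := by push_cast; linear_combination -h16p
      have hdvd : (q : ℤ) ∣ (p : ℤ) - 16 := (ZMod.intCast_zmod_eq_zero_iff_dvd _ _).mp hz
      have hle : (q : ℤ) ≤ (p : ℤ) - 16 := Int.le_of_dvd (by
        have : (17 : ℤ) ≤ (p : ℤ) := by exact_mod_cast hp17
        omega) hdvd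
      have : (2 * p + 1 : ℤ) ≤ (q : ℤ) := by exact_mod_cast hq2p1
      omega
    · rw [hχn1, he] at h16p
      push_cast at h16p
      have hz : ((((p : ℤ) + 16) : ℤ) : ZMod q) = 0 := by push_cast; linear_combination h16p
      have hdvd : (q : ℤ) ∣ (p : ℤ) + 16 := (ZMod.intCast_zmod_eq_zero_iff_dvd _ _).mp hz
      have hle : (q : ℤ) ≤ (p : ℤ) + 16 := Int.le_of_dvd (by positivity) hdvd
      have : (2 * p + 1 : ℤ) ≤ (q : ℤ) := by exact_mod_cast hq2p1
      omega

lemma not_25_dvd (p : ℕ) [Fact p.Prime] (hodd : Odd p) (hp5 : p ≠ 5) :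
    ¬ (25 : ℤ) ∣ 4 ^ p + 1 := by
  intro h
  have h4p : (4 : ZMod 25) ^ p = -1 := by
    have h0 : (((4 ^ p + 1 : ℤ)) : ZMod 25) = 0 := by
      rw [show ((25 : ℤ)) = ((25 : ℕ) : ℤ) from by norm_num] at h
      exact (ZMod.intCast_zmod_eq_zero_iff_dvd _ 25).mpr h
    push_cast at h0
    linear_combination h0
  have hr5 : p % 10 ≠ 5 := by
    intro hr
    have : 5 ∣ p := by omega
    have := (Nat.prime_dvd_prime_iff_eq (by norm_num) Fact.out).mp this
    exact hp5 this.symm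
  have hrodd : p % 2 = 1 := Nat.odd_iff.mp hodd
  have hp10 : p = 10 * (p / 10) + p % 10 := by omega
  rw [hp10, pow_add, pow_mul, show (4 : ZMod 25) ^ 10 = 1 from by decide, one_pow, one_mul]
    at h4p
  have hlt : p % 10 < 10 := Nat.mod_lt _ (by norm_num)
  interval_cases h : p % 10 <;> first | omega | (revert h4p; decide)

/-- `d₊ = gcd(S_A(4), 4^p + 1)` equals `5` if `5 ∣ p − 2` and `1` otherwise. -/
theorem stmt3 (p : ℕ) [Fact p.Prime] (hodd : Odd p) :
    Int.gcd (SA p) (4 ^ p + 1) = if 5 ∣ p - 2 then 5 else 1 := by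
  rcases lt_or_ge p 17 with hp | hp
  · have hp2 := (Fact.out : p.Prime).two_le
    interval_cases p <;>
      first
        | (exfalso; rw [Nat.odd_iff] at hodd; omega)
        | (exfalso; exact (by norm_num : ¬ Nat.Prime 9) Fact.out)
        | (exfalso; exact (by norm_num : ¬ Nat.Prime 15) Fact.out)
        | (show Int.gcd (@SA _ ⟨by norm_num⟩) _ = _; decide; done)
  · have hp2 := (Fact.out : p.Prime).two_le
    set d := Int.gcd (SA p) (4 ^ p + 1) with hd
    have hM0 : (4 : ℤ) ^ p + 1 ≠ 0 := by positivity
    have hd0 : d ≠ 0 := by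
      rw [hd, Ne, Int.gcd_eq_zero_iff]
      rintro ⟨-, h⟩
      exact hM0 h
    have hdS : (d : ℤ) ∣ SA p := Int.gcd_dvd_left _ _
    have hdM : (d : ℤ) ∣ 4 ^ p + 1 := Int.gcd_dvd_right _ _
    have hprime5 : ∀ r : ℕ, r.Prime → r ∣ d → r = 5 := by
      intro r hr hrd
      haveI : Fact r.Prime := ⟨hr⟩
      by_contra hr5
      have hrd' : (r : ℤ) ∣ (d : ℤ) := Int.natCast_dvd_natCast.mpr hrd
      exact key p r hodd hp hr5 (hrd'.trans hdS) (hrd'.trans hdM)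
    have h25 := not_25_dvd p hodd (by omega)
    have hd25 : ¬ 25 ∣ d := by
      intro h
      exact h25 ((Int.natCast_dvd_natCast.mpr h).trans hdM)
    have hdvd5S : (5 : ℤ) ∣ SA p ↔ (p : ZMod 5) = 2 := by
      constructor
      · intro h
        have h0 : ((SA p : ℤ) : ZMod 5) = 0 := by
          rw [show ((5 : ℤ)) = ((5 : ℕ) : ℤ) from by norm_num] at h
          exact (ZMod.intCast_zmod_eq_zero_iff_dvd _ 5).mpr h
        rw [SA_mod5 p hodd] at h0
        revert h0
        have : ∀ x : ZMod 5, 2 * (x - 2) = 0 → x = 2 := by decide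
        exact this _
      · intro h
        have h0 : ((SA p : ℤ) : ZMod 5) = 0 := by
          rw [SA_mod5 p hodd, h]
          ring
        rw [show ((5 : ℤ)) = ((5 : ℕ) : ℤ) from by norm_num]
        exact (ZMod.intCast_zmod_eq_zero_iff_dvd _ 5).mp h0
    have hmod : (p : ZMod 5) = 2 ↔ p % 5 = 2 := by
      rw [show (2 : ZMod 5) = ((2 : ℕ) : ZMod 5) from by norm_num,
        ZMod.natCast_eq_natCast_iff]
      unfold Nat.ModEq
      omega
    have h5M : (5 : ℤ) ∣ 4 ^ p + 1 := by
      have h0 : (((4 ^ p + 1 : ℤ)) : ZMod 5) = 0 := by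
        push_cast
        rw [show (4 : ZMod 5) = -1 from by decide, hodd.neg_one_pow]
        ring
      rw [show ((5 : ℤ)) = ((5 : ℕ) : ℤ) from by norm_num]
      exact (ZMod.intCast_zmod_eq_zero_iff_dvd _ 5).mp h0
    by_cases h5 : 5 ∣ p - 2
    · rw [if_pos h5]
      have hpm : p % 5 = 2 := by omega
      have h5S : (5 : ℤ) ∣ SA p := hdvd5S.mpr (hmod.mpr hpm)
      have h5d : 5 ∣ d := by
        have h := Int.dvd_gcd h5S h5M
        rw [hd]
        exact_mod_cast h
      obtain ⟨m, hm⟩ := h5d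
      have hm1 : m = 1 := by
        by_contra hm1
        have hm0 : m ≠ 0 := by rintro rfl; simp [hm] at hd0
        obtain ⟨r, hrP, hrm⟩ := Nat.exists_prime_and_dvd hm1
        have hr5 : r = 5 := hprime5 r hrP (hrm.trans ⟨5, by omega⟩)
        exact hd25 ⟨m / r, by subst hr5; obtain ⟨c, hc⟩ := hrm; omega⟩
      omega
    · rw [if_neg h5]
      by_contra hd1
      obtain ⟨r, hrP, hrd⟩ := Nat.exists_prime_and_dvd hd1
      have hr5 : r = 5 := hprime5 r hrP hrd
      subst hr5
      have h5S : (5 : ℤ) ∣ SA p := (Int.natCast_dvd_natCast.mpr hrd).trans hdS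
      have hpm : p % 5 = 2 := hmod.mp (hdvd5S.mp h5S)
      omega
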